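/- For each n ≥ 1, the number of arithmetic Y-frieze patterns of width n is finite. -/

import Mathlib

/-- A closed Y-frieze pattern of width `n`: a staggered array `b i j` (row `k`
consists of entries `b i (i+k+2)`) satisfying the Y-diamond rule, with zeroth
row and `(n+1)`-th row of `0`s, a row of `-1`s below, nonzero intermediate
rows, and normalized to `0` outside the pattern. -/
structure ClosedYFrieze (n : ℕ) where
  b : ℤ → ℤ → ℚ
  diamond : ∀ i j : ℤ, 3 ≤ j - i → j - i ≤ (n : ℤ) + 3 →
    b i j * b (i + 1) (j + 1) = (1 + b (i + 1) j) * (1 + b i (j + 1))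
  topZero : ∀ i : ℤ, b i (i + 2) = 0
  botZero : ∀ i : ℤ, b i (i + (n : ℤ) + 3) = 0
  negRow : ∀ i : ℤ, b i (i + (n : ℤ) + 4) = -1
  rowsNonzero : ∀ k : ℕ, 1 ≤ k → k ≤ n → ∃ i : ℤ, b i (i + (k : ℤ) + 2) ≠ 0
  outside : ∀ i j : ℤ, j - i ≤ 1 ∨ (n : ℤ) + 5 ≤ j - i → b i j = 0

/-- All entries of the nonzero rows are positive rationals. -/
def ClosedYFrieze.Positive {n : ℕ} (P : ClosedYFrieze n) : Prop :=
  ∀ (i : ℤ) (k : ℕ), 1 ≤ k → k ≤ n → 0 < P.b i (i + (k : ℤ) + 2)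

/-- All entries of the nonzero rows are positive integers. -/
def ClosedYFrieze.Arithmetic {n : ℕ} (P : ClosedYFrieze n) : Prop :=
  ∀ (i : ℤ) (k : ℕ), 1 ≤ k → k ≤ n → ∃ m : ℕ, 0 < m ∧ P.b i (i + (k : ℤ) + 2) = (m : ℚ)

namespace YFaux

variable {n : ℕ}

/-- Entry of row `k` on diagonal `i`. -/
def rr (P : ClosedYFrieze n) (i : ℤ) (k : ℕ) : ℚ := P.b i (i + (k : ℤ) + 2)

lemma rr_zero (P : ClosedYFrieze n) (i : ℤ) : rr P i 0 = 0 := by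
  have h := P.topZero i
  simpa [rr] using h

lemma rr_top (P : ClosedYFrieze n) (i : ℤ) : rr P i (n + 1) = 0 := by
  have h := P.botZero i
  unfold rr
  rw [show (i : ℤ) + ((n : ℕ) + 1 : ℕ) + 2 = i + (n : ℤ) + 3 by push_cast; ring]
  exact h

lemma rr_diamond (P : ClosedYFrieze n) (i : ℤ) (k : ℕ) (hk : k ≤ n) :
    rr P i (k + 1) * rr P (i + 1) (k + 1)
      = (1 + rr P (i + 1) k) * (1 + rr P i (k + 2)) := by
  have h := P.diamond i (i + (k : ℤ) + 3) (by omega) (by omega)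
  unfold rr
  rw [show (i : ℤ) + ((k + 1 : ℕ) : ℤ) + 2 = i + (k : ℤ) + 3 by push_cast; ring,
    show (i : ℤ) + 1 + ((k + 1 : ℕ) : ℤ) + 2 = i + (k : ℤ) + 3 + 1 by push_cast; ring,
    show (i : ℤ) + 1 + (k : ℤ) + 2 = i + (k : ℤ) + 3 by ring,
    show (i : ℤ) + ((k + 2 : ℕ) : ℤ) + 2 = i + (k : ℤ) + 3 + 1 by push_cast; ring]
  exact h

lemma rr_int (P : ClosedYFrieze n) (hP : P.Arithmetic) (i : ℤ) (k : ℕ)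
    (h1 : 1 ≤ k) (h2 : k ≤ n) : ∃ m : ℕ, 0 < m ∧ rr P i k = (m : ℚ) :=
  hP i k h1 h2

lemma rr_one_le (P : ClosedYFrieze n) (hP : P.Arithmetic) (i : ℤ) (k : ℕ)
    (h1 : 1 ≤ k) (h2 : k ≤ n) : 1 ≤ rr P i k := by
  obtain ⟨m, hm, he⟩ := hP i k h1 h2
  unfold rr
  rw [he]
  exact_mod_cast hm

lemma rr_nonneg (P : ClosedYFrieze n) (hP : P.Arithmetic) (i : ℤ) (k : ℕ)
    (h2 : k ≤ n + 1) : 0 ≤ rr P i k := by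
  rcases Nat.eq_zero_or_pos k with h | h
  · subst h; rw [rr_zero]
  rcases eq_or_lt_of_le h2 with h' | h'
  · subst h'; rw [rr_top]
  · exact le_trans zero_le_one (rr_one_le P hP i k h (by omega))

lemma rr_ne_zero (P : ClosedYFrieze n) (hP : P.Arithmetic) (i : ℤ) (k : ℕ)
    (h1 : 1 ≤ k) (h2 : k ≤ n) : rr P i k ≠ 0 := by
  have := rr_one_le P hP i k h1 h2; positivity


/-- Telescoped product of diamond relations down a column. -/
lemma keyA (P : ClosedYFrieze n) (i : ℤ) :
    ∀ m : ℕ, m ≤ n →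
    (∏ k ∈ Finset.range m, (rr P i (k + 1) * rr P (i + 1) (k + 1))) *
        ((1 + rr P i 1) * (1 + rr P (i + 1) m))
      = (∏ k ∈ Finset.range m, (1 + rr P i (k + 1))) *
          (∏ k ∈ Finset.range m, (1 + rr P (i + 1) (k + 1))) * (1 + rr P i (m + 1)) := by
  intro m
  induction m with
  | zero => intro _; simp [rr_zero]
  | succ m ih =>
    intro hm
    have ih' := ih (by omega)
    have hD := rr_diamond P i m (by omega)
    rw [Finset.prod_range_succ, Finset.prod_range_succ, Finset.prod_range_succ]
    linear_combination
      (∏ k ∈ Finset.range m, (rr P i (k + 1) * rr P (i + 1) (k + 1))) * (1 + rr P i 1) *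
          (1 + rr P (i + 1) (m + 1)) * hD
        + (1 + rr P (i + 1) (m + 1)) * (1 + rr P i (m + 2)) * ih'

lemma prod_one_add_le (P : ClosedYFrieze n) (hP : P.Arithmetic) (j : ℤ) :
    (∏ k ∈ Finset.range n, (1 + rr P j (k + 1)))
      ≤ 2 ^ n * ∏ k ∈ Finset.range n, rr P j (k + 1) := by
  have h := Finset.prod_le_prod (s := Finset.range n)
    (f := fun k => 1 + rr P j (k + 1)) (g := fun k => 2 * rr P j (k + 1))
    (fun k hk => by
      have := rr_one_le P hP j (k + 1) (by omega) (by simpa using Finset.mem_range.mp hk)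
      linarith)
    (fun k hk => by
      have := rr_one_le P hP j (k + 1) (by omega) (by simpa using Finset.mem_range.mp hk)
      linarith)
  calc (∏ k ∈ Finset.range n, (1 + rr P j (k + 1)))
      ≤ ∏ k ∈ Finset.range n, (2 * rr P j (k + 1)) := h
    _ = 2 ^ n * ∏ k ∈ Finset.range n, rr P j (k + 1) := by
        rw [Finset.prod_mul_distrib, Finset.prod_const, Finset.card_range]

lemma prod_rr_pos (P : ClosedYFrieze n) (hP : P.Arithmetic) (j : ℤ) :
    0 < ∏ k ∈ Finset.range n, rr P j (k + 1) := by
  apply Finset.prod_pos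
  intro k hk
  have := rr_one_le P hP j (k + 1) (by omega) (by simpa using Finset.mem_range.mp hk)
  linarith

lemma row_one_bound (P : ClosedYFrieze n) (hP : P.Arithmetic) (hn : 1 ≤ n) (i : ℤ) :
    1 + rr P i 1 ≤ (4 : ℚ) ^ n := by
  have hA := keyA P i n le_rfl
  rw [rr_top, Finset.prod_mul_distrib] at hA
  set F := ∏ k ∈ Finset.range n, rr P i (k + 1) with hF
  set G := ∏ k ∈ Finset.range n, rr P (i + 1) (k + 1) with hG
  have hFpos : 0 < F := prod_rr_pos P hP i
  have hGpos : 0 < G := prod_rr_pos P hP (i + 1)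
  have h1 := prod_one_add_le P hP i
  have h2 := prod_one_add_le P hP (i + 1)
  have hu : 1 ≤ rr P i 1 := rr_one_le P hP i 1 le_rfl hn
  have hv : 1 ≤ rr P (i + 1) n := rr_one_le P hP (i + 1) n hn le_rfl
  have hp1 : (0 : ℚ) ≤ ∏ k ∈ Finset.range n, (1 + rr P i (k + 1)) := by
    apply Finset.prod_nonneg; intro k hk
    have := rr_one_le P hP i (k + 1) (by omega) (by simpa using Finset.mem_range.mp hk)
    linarith
  have hkey : F * G * ((1 + rr P i 1) * (1 + rr P (i + 1) n)) ≤ (2:ℚ)^n * F * ((2:ℚ)^n * G) := by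
    rw [hA]
    have := mul_le_mul h1 h2 (by
      apply Finset.prod_nonneg; intro k hk
      have := rr_one_le P hP (i + 1) (k + 1) (by omega) (by simpa using Finset.mem_range.mp hk)
      linarith) (by positivity)
    calc (∏ k ∈ Finset.range n, (1 + rr P i (k + 1))) *
          (∏ k ∈ Finset.range n, (1 + rr P (i + 1) (k + 1))) * (1 + 0)
        = (∏ k ∈ Finset.range n, (1 + rr P i (k + 1))) *
          (∏ k ∈ Finset.range n, (1 + rr P (i + 1) (k + 1))) := by ring
      _ ≤ (2 ^ n * F) * (2 ^ n * G) := this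
      _ = (2:ℚ)^n * F * ((2:ℚ)^n * G) := by ring
  have h4 : ((4:ℚ))^n = (2:ℚ)^n * (2:ℚ)^n := by
    rw [← mul_pow]; norm_num
  have heq : (2:ℚ)^n * F * ((2:ℚ)^n * G) = F * G * (4:ℚ)^n := by rw [h4]; ring
  rw [heq] at hkey
  have h6 : (1 + rr P i 1) * (1 + rr P (i + 1) n) ≤ (4:ℚ)^n := by
    have hFG : 0 < F * G := mul_pos hFpos hGpos
    have := (mul_le_mul_iff_right₀ hFG).mp (by linarith [hkey] :
      F * G * ((1 + rr P i 1) * (1 + rr P (i + 1) n)) ≤ F * G * (4:ℚ)^n)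
    linarith [this]
  nlinarith [h6, hu, hv]

lemma row_bound (P : ClosedYFrieze n) (hP : P.Arithmetic) (hn : 1 ≤ n) :
    ∀ j : ℕ, j + 1 ≤ n → ∀ i : ℤ, 1 + rr P i (j + 1) ≤ ((4 : ℚ) ^ n) ^ (2 ^ j) := by
  intro j
  induction j with
  | zero =>
    intro _ i
    simpa using row_one_bound P hP hn i
  | succ j ih =>
    intro hj i
    have ih1 := ih (by omega) i
    have ih2 := ih (by omega) (i + 1)
    have hD := rr_diamond P i j (by omega)
    have h0 : 0 ≤ rr P (i + 1) j := rr_nonneg P hP (i + 1) j (by omega)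
    have h2 : 0 ≤ rr P i (j + 2) := rr_nonneg P hP i (j + 2) (by omega)
    have ha : 1 ≤ rr P i (j + 1) := rr_one_le P hP i (j + 1) (by omega) (by omega)
    have hb : 1 ≤ rr P (i + 1) (j + 1) := rr_one_le P hP (i + 1) (j + 1) (by omega) (by omega)
    have hstep : 1 + rr P i (j + 2) ≤ rr P i (j + 1) * rr P (i + 1) (j + 1) := by
      nlinarith
    have hsq : rr P i (j + 1) * rr P (i + 1) (j + 1)
        ≤ ((4 : ℚ) ^ n) ^ (2 ^ j) * ((4 : ℚ) ^ n) ^ (2 ^ j) := by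
      apply mul_le_mul (by linarith) (by linarith) (by linarith) (by positivity)
    calc 1 + rr P i (j + 2) ≤ ((4 : ℚ) ^ n) ^ (2 ^ j) * ((4 : ℚ) ^ n) ^ (2 ^ j) :=
          le_trans hstep hsq
      _ = ((4 : ℚ) ^ n) ^ (2 ^ (j + 1)) := by
          rw [← pow_add]; congr 1; omega

/-- every entry of an arithmetic Y-frieze, as a natural number, is at most `4 ^ (n * 2 ^ n)`. -/
lemma entry_bound (P : ClosedYFrieze n) (hP : P.Arithmetic) (hn : 1 ≤ n)
    (i : ℤ) (k : ℕ) (h1 : 1 ≤ k) (h2 : k ≤ n) (m : ℕ) (hm : rr P i k = (m : ℚ)) :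
    m ≤ 4 ^ (n * 2 ^ n) := by
  obtain ⟨j, rfl⟩ : ∃ j, k = j + 1 := ⟨k - 1, by omega⟩
  have hb := row_bound P hP hn j h2 i
  have hmono : ((4 : ℚ) ^ n) ^ (2 ^ j) ≤ ((4 : ℚ) ^ n) ^ (2 ^ n) := by
    have h14 : (1:ℚ) ≤ 4 ^ n := one_le_pow₀ (by norm_num)
    exact pow_le_pow_right₀ h14 (Nat.pow_le_pow_right (by norm_num) (by omega))
  have : (m : ℚ) ≤ ((4 : ℚ) ^ n) ^ (2 ^ n) := by
    rw [← hm]; linarith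
  have hcast : ((4 ^ (n * 2 ^ n) : ℕ) : ℚ) = ((4 : ℚ) ^ n) ^ (2 ^ n) := by
    push_cast [pow_mul]; ring
  rw [← hcast] at this
  exact_mod_cast this


lemma step_right (P Q : ClosedYFrieze n) (hP : P.Arithmetic) (hQ : Q.Arithmetic) (i : ℤ)
    (h : ∀ k : ℕ, k ≤ n + 1 → rr P i k = rr Q i k) :
    ∀ k : ℕ, k ≤ n + 1 → rr P (i + 1) k = rr Q (i + 1) k := by
  intro k
  induction k with
  | zero => intro _; rw [rr_zero, rr_zero]
  | succ k ih =>
    intro hk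
    rcases eq_or_lt_of_le hk with h' | h'
    · rw [h', rr_top, rr_top]
    have hk' : k + 1 ≤ n := by omega
    have dP := rr_diamond P i k (by omega)
    have dQ := rr_diamond Q i k (by omega)
    rw [← h (k + 1) (by omega), ← h (k + 2) (by omega), ← ih (by omega)] at dQ
    exact mul_left_cancel₀ (rr_ne_zero P hP i (k + 1) (by omega) hk') (dP.trans dQ.symm)

lemma step_left_aux (P Q : ClosedYFrieze n) (hP : P.Arithmetic) (hQ : Q.Arithmetic) (i : ℤ)
    (h : ∀ k : ℕ, k ≤ n + 1 → rr P i k = rr Q i k) :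
    ∀ d k : ℕ, k + d = n + 1 → rr P (i - 1) k = rr Q (i - 1) k := by
  intro d
  induction d with
  | zero => intro k hk; obtain rfl : k = n + 1 := by omega
            rw [rr_top, rr_top]
  | succ d ih =>
    intro k hk
    rcases Nat.eq_zero_or_pos k with rfl | hpos
    · rw [rr_zero, rr_zero]
    obtain ⟨j, rfl⟩ : ∃ j, k = j + 1 := ⟨k - 1, by omega⟩
    have dP := rr_diamond P (i - 1) j (by omega)
    have dQ := rr_diamond Q (i - 1) j (by omega)
    rw [show i - 1 + 1 = i by ring] at dP dQ
    rw [← h (j + 1) (by omega), ← h j (by omega), ← ih (j + 2) (by omega)] at dQ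
    exact mul_right_cancel₀ (rr_ne_zero P hP i (j + 1) (by omega) (by omega))
      (dP.trans dQ.symm)

lemma step_left (P Q : ClosedYFrieze n) (hP : P.Arithmetic) (hQ : Q.Arithmetic) (i : ℤ)
    (h : ∀ k : ℕ, k ≤ n + 1 → rr P i k = rr Q i k) :
    ∀ k : ℕ, k ≤ n + 1 → rr P (i - 1) k = rr Q (i - 1) k := by
  intro k hk
  exact step_left_aux P Q hP hQ i h (n + 1 - k) k (by omega)

lemma eq_all (P Q : ClosedYFrieze n) (hP : P.Arithmetic) (hQ : Q.Arithmetic)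
    (h0 : ∀ k : ℕ, k ≤ n + 1 → rr P 0 k = rr Q 0 k) :
    ∀ (i : ℤ) (k : ℕ), k ≤ n + 1 → rr P i k = rr Q i k := by
  have aux : ∀ m : ℕ, (∀ k : ℕ, k ≤ n + 1 → rr P (m : ℤ) k = rr Q (m : ℤ) k) ∧
      (∀ k : ℕ, k ≤ n + 1 → rr P (-(m : ℤ)) k = rr Q (-(m : ℤ)) k) := by
    intro m
    induction m with
    | zero => exact ⟨by simpa using h0, by simpa using h0⟩
    | succ m ih =>
      constructor
      · have := step_right P Q hP hQ (m : ℤ) ih.1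
        intro k hk
        have e : ((m + 1 : ℕ) : ℤ) = (m : ℤ) + 1 := by push_cast; ring
        rw [e]
        exact this k hk
      · have := step_left P Q hP hQ (-(m : ℤ)) ih.2
        intro k hk
        have e : (-((m + 1 : ℕ) : ℤ)) = -(m : ℤ) - 1 := by push_cast; ring
        rw [e]
        exact this k hk
  intro i
  obtain ⟨m, rfl | rfl⟩ := Int.eq_nat_or_neg i
  · exact (aux m).1
  · exact (aux m).2

lemma b_eq (P Q : ClosedYFrieze n) (hP : P.Arithmetic) (hQ : Q.Arithmetic)
    (h0 : ∀ k : ℕ, k ≤ n + 1 → rr P 0 k = rr Q 0 k) : P.b = Q.b := by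
  have hall := eq_all P Q hP hQ h0
  funext i j
  have hcases : j - i ≤ 1 ∨ (n : ℤ) + 5 ≤ j - i ∨ j - i = (n : ℤ) + 4 ∨
      (2 ≤ j - i ∧ j - i ≤ (n : ℤ) + 3) := by omega
  rcases hcases with h | h | h | ⟨h1, h2⟩
  · rw [P.outside i j (Or.inl h), Q.outside i j (Or.inl h)]
  · rw [P.outside i j (Or.inr h), Q.outside i j (Or.inr h)]
  · obtain rfl : j = i + (n : ℤ) + 4 := by omega
    rw [P.negRow i, Q.negRow i]
  · set k : ℕ := (j - i - 2).toNat with hkdef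
    have hk : k ≤ n + 1 := by omega
    have hj : j = i + (k : ℤ) + 2 := by omega
    rw [hj]
    exact hall i k hk

lemma frieze_eq (P Q : ClosedYFrieze n) (hP : P.Arithmetic) (hQ : Q.Arithmetic)
    (h0 : ∀ k : ℕ, k ≤ n + 1 → rr P 0 k = rr Q 0 k) : P = Q := by
  have hb := b_eq P Q hP hQ h0
  obtain ⟨pb, pd, pt, pbo, pn, pr, po⟩ := P
  obtain ⟨qb, qd, qt, qbo, qn, qr, qo⟩ := Q
  dsimp only at hb
  subst hb
  rfl

end YFaux

/-- For each `n ≥ 1`, the number of arithmetic Y-frieze patterns of width `n`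
is finite. -/
theorem stmt7 (n : ℕ) (hn : 1 ≤ n) :
    {P : ClosedYFrieze n | P.Arithmetic}.Finite := by
  classical
  set Φ : ClosedYFrieze n → (Fin n → ℚ) :=
    fun P k => YFaux.rr P 0 ((k : ℕ) + 1) with hΦ
  have hinj : Set.InjOn Φ {P | P.Arithmetic} := by
    intro P hP Q hQ hPQ
    apply YFaux.frieze_eq P Q hP hQ
    intro k hk
    rcases Nat.eq_zero_or_pos k with rfl | hpos
    · rw [YFaux.rr_zero, YFaux.rr_zero]
    rcases eq_or_lt_of_le hk with h' | h'
    · rw [h', YFaux.rr_top, YFaux.rr_top]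
    obtain ⟨j, rfl⟩ : ∃ j, k = j + 1 := ⟨k - 1, by omega⟩
    have hj : j < n := by omega
    have := congrFun hPQ ⟨j, hj⟩
    simpa [hΦ] using this
  have himg : (Φ '' {P | P.Arithmetic}).Finite := by
    apply Set.Finite.subset (Set.Finite.pi
      (fun _ : Fin n => (Set.finite_Icc 1 (4 ^ (n * 2 ^ n))).image (Nat.cast : ℕ → ℚ)))
    rintro f ⟨P, hP, rfl⟩
    rw [Set.mem_pi]
    intro k _
    have hk : (k : ℕ) + 1 ≤ n := k.isLt
    obtain ⟨m, hm, he⟩ := hP 0 ((k : ℕ) + 1) (by omega) hk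
    have he' : YFaux.rr P 0 ((k : ℕ) + 1) = (m : ℚ) := he
    have hb := YFaux.entry_bound P hP hn 0 ((k : ℕ) + 1) (by omega) hk m he'
    exact ⟨m, ⟨hm, hb⟩, he'.symm⟩
  exact Set.Finite.of_finite_image himg hinj
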